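/- Let x ∈ [0,1]^n with coordinate mean x̄ = (1/n)Σᵢ xᵢ, and let m ∈ [0,1]. If the optimal solution y* to min_{y ∈ [0,1]^n} ‖x - y‖₂² subject to (1/n)Σᵢ yᵢ = m satisfies x̄ < m, then y*ᵢ ≥ xᵢ for every coordinate i. -/

import Mathlib

open Finset

lemma norm_sq_eq_sum' {n : ℕ} (v : EuclideanSpace ℝ (Fin n)) :
    ‖v‖^2 = ∑ i, (v i)^2 := by
  rw [EuclideanSpace.norm_eq, Real.sq_sqrt (by positivity)]
  simp [sq_abs]

/-- If the target mean `m` exceeds the coordinate mean of `x`, then the least-squares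
optimal mean-shifted point `y*` weakly increases every coordinate of `x`. -/
theorem mean_shift_monotone (n : ℕ) (hn : 0 < n)
    (x : EuclideanSpace ℝ (Fin n)) (hx : ∀ i, x i ∈ Set.Icc (0:ℝ) 1)
    (m : ℝ) (hm : m ∈ Set.Icc (0:ℝ) 1)
    (hmean : (∑ i, x i) / n < m)
    (y : EuclideanSpace ℝ (Fin n))
    (hyfeas : (∀ i, y i ∈ Set.Icc (0:ℝ) 1) ∧ (∑ i, y i) / n = m)
    (hyopt : ∀ z : EuclideanSpace ℝ (Fin n),
      (∀ i, z i ∈ Set.Icc (0:ℝ) 1) → (∑ i, z i) / n = m →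
        ‖x - y‖^2 ≤ ‖x - z‖^2) :
    ∀ i, x i ≤ y i := by
  obtain ⟨hyIcc, hysum⟩ := hyfeas
  intro j
  by_contra hj
  push_neg at hj
  have hnpos : (0:ℝ) < n := by exact_mod_cast hn
  have hsum : (∑ i, x i) < ∑ i, y i := by
    rw [← hysum] at hmean
    exact (div_lt_div_iff_of_pos_right hnpos).mp hmean
  have hk : ∃ k, x k < y k := by
    by_contra h
    push_neg at h
    exact absurd (Finset.sum_le_sum (fun i _ => h i)) (not_le.mpr hsum)
  obtain ⟨k, hk⟩ := hk
  have hjk : j ≠ k := fun h => absurd hk (by rw [← h]; linarith)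
  set a : ℝ := x j - y j with ha_def
  set b : ℝ := y k - x k with hb_def
  have ha : 0 < a := by simp [ha_def]; linarith
  have hb : 0 < b := by simp [hb_def]; linarith
  set ε : ℝ := min a b with hε_def
  have hε : 0 < ε := lt_min ha hb
  have hεa : ε ≤ a := min_le_left _ _
  have hεb : ε ≤ b := min_le_right _ _
  have hεab : ε < a + b := lt_of_le_of_lt hεa (by linarith)
  set z : EuclideanSpace ℝ (Fin n) :=
    WithLp.toLp 2 (fun i => if i = j then y j + ε else if i = k then y k - ε else y i) with hz_def
  have hzj : z j = y j + ε := by simp [hz_def]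
  have hzk : z k = y k - ε := by simp [hz_def, hjk, Ne.symm hjk]
  have hzother : ∀ i, i ≠ j → i ≠ k → z i = y i := by
    intro i h1 h2; simp [hz_def, h1, h2]
  have hzIcc : ∀ i, z i ∈ Set.Icc (0:ℝ) 1 := by
    intro i
    rcases eq_or_ne i j with rfl | h1
    · rw [hzj]
      constructor
      · have := (hyIcc i).1; linarith
      · have := (hx i).2; linarith
    · rcases eq_or_ne i k with rfl | h2
      · rw [hzk]
        constructor
        · have := (hx i).1; linarith
        · have := (hyIcc i).2; linarith
      · rw [hzother i h1 h2]; exact hyIcc i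
  have split : ∀ f : Fin n → ℝ,
      ∑ i, f i = f j + f k + ∑ i ∈ (univ.erase j).erase k, f i := by
    intro f
    rw [← Finset.add_sum_erase _ f (mem_univ j),
      ← Finset.add_sum_erase _ f (mem_erase.mpr ⟨Ne.symm hjk, mem_univ k⟩)]
    ring
  have hzsum : (∑ i, z i) / n = m := by
    rw [← hysum]
    congr 1
    rw [split (fun i => z i), split (fun i => y i), hzj, hzk,
      Finset.sum_congr rfl (fun i hi => by
        simp only [mem_erase] at hi
        exact hzother i hi.2.1 hi.1)]
    ring
  have hopt := hyopt z hzIcc hzsum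
  rw [norm_sq_eq_sum', norm_sq_eq_sum'] at hopt
  simp only [PiLp.sub_apply] at hopt
  rw [split (fun i => (x i - y i)^2), split (fun i => (x i - z i)^2), hzj, hzk] at hopt
  have hrest : ∑ i ∈ (univ.erase j).erase k, (x i - z i)^2
      = ∑ i ∈ (univ.erase j).erase k, (x i - y i)^2 :=
    Finset.sum_congr rfl (fun i hi => by
      simp only [mem_erase] at hi
      rw [hzother i hi.2.1 hi.1])
  rw [hrest] at hopt
  have hxj : x j - y j = a := by simp [ha_def]
  have hxk : x k - y k = -b := by simp [hb_def]
  nlinarith [sq_nonneg (x j - y j - ε), sq_nonneg (x k - y k + ε), hε, hεab]
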